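/- Let R be a right perfect ring. Then there exists an epimorphism g : I → J of right R-modules with I injective such that a right R-module M is projective if and only if every homomorphism M → J factors through g. -/

import Mathlib

universe u

/-- Flatness of a left module over an arbitrary ring, via the equational criterion:
whenever `∑ i, r i • x i = 0`, the tuple `x` factors through a tuple `y` by a matrix
`a` with `∑ i, r i * a i j = 0`. -/
def FlatModule (R : Type u) [Ring R] (M : Type u)
    [AddCommGroup M] [Module R M] : Prop :=
  ∀ (n : ℕ) (r : Fin n → R) (x : Fin n → M), (∑ i, r i • x i) = 0 →
    ∃ (m : ℕ) (a : Fin n → Fin m → R) (y : Fin m → M),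
      (∀ i, x i = ∑ j, a i j • y j) ∧ ∀ j, (∑ i, r i * a i j) = 0

section Aux

/-- Type synonym: characters of `R` with left `R`-action `(c • f) t = f (t * c)`. -/
def CharR (R : Type u) [Ring R] : Type u := R →+ AddCircle (1 : ℚ)

namespace CharR
variable {R : Type u} [Ring R]

instance : FunLike (CharR R) R (AddCircle (1 : ℚ)) :=
  inferInstanceAs (FunLike (R →+ _) R _)

instance : AddMonoidHomClass (CharR R) R (AddCircle (1 : ℚ)) :=
  inferInstanceAs (AddMonoidHomClass (R →+ _) R _)

instance : AddCommGroup (CharR R) := inferInstanceAs (AddCommGroup (R →+ _))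

instance : SMul R (CharR R) :=
  ⟨fun c f => AddMonoidHom.comp (f : R →+ AddCircle (1 : ℚ)) (AddMonoidHom.mulRight c)⟩

@[simp] lemma smul_apply (c : R) (f : CharR R) (t : R) :
    (c • f) t = f (t * c) := rfl

@[simp] lemma add_apply (f g : CharR R) (t : R) : (f + g) t = f t + g t := rfl

@[simp] lemma zero_apply (t : R) : (0 : CharR R) t = 0 := rfl

@[ext] lemma ext {f g : CharR R} (h : ∀ t, f t = g t) : f = g := DFunLike.ext _ _ h

instance : Module R (CharR R) where
  one_smul f := ext fun t => by rw [smul_apply, mul_one]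
  mul_smul c c' f := ext fun t => by rw [smul_apply, smul_apply, smul_apply, mul_assoc]
  smul_zero c := rfl
  smul_add c f g := rfl
  add_smul c c' f := ext fun t => by
    rw [add_apply, smul_apply, smul_apply, smul_apply, mul_add, map_add]
  zero_smul f := ext fun t => by rw [smul_apply, mul_zero, map_zero, zero_apply]

end CharR

variable (R : Type u) [Ring R]

/-- Index type: all finite tuples of elements of `R`. -/
abbrev RelIdx : Type u := Σ n : ℕ, Fin n → R

/-- The submodule of `CharR R` of characters annihilating the right ideal generated
by the tuple `σ.2`. -/
def AnnChar (σ : RelIdx R) : Submodule R (CharR R) where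
  carrier := {f | ∀ (i : Fin σ.1) (b : R), f (σ.2 i * b) = 0}
  add_mem' := by
    intro f g hf hg i b
    show (f + g) (σ.2 i * b) = 0
    rw [CharR.add_apply, hf i b, hg i b, add_zero]
  zero_mem' := fun i b => rfl
  smul_mem' := by
    intro c f hf i b
    show (c • f) (σ.2 i * b) = 0
    rw [CharR.smul_apply, mul_assoc]
    exact hf i (b * c)

variable {R}

/-- A character of a module assembled from a character of the module and a point. -/
def charOfSmul {S : Type u} [AddCommGroup S] [Module R S]
    (χ : S →+ AddCircle (1 : ℚ)) (t : S) : CharR R where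
  toFun c := χ (c • t)
  map_zero' := by show χ ((0:R) • t) = 0; rw [zero_smul, map_zero]
  map_add' c c' := by show χ ((c + c') • t) = χ (c • t) + χ (c' • t); rw [add_smul, map_add]

@[simp] lemma charOfSmul_apply {S : Type u} [AddCommGroup S] [Module R S]
    (χ : S →+ AddCircle (1 : ℚ)) (t : S) (c : R) :
    charOfSmul χ t c = χ (c • t) := rfl

/-- `ℚ/ℤ` is a cogenerator: if every character killing a subgroup kills `s`, then `s`
belongs to the subgroup. -/
lemma mem_of_forall_char {S : Type u} [AddCommGroup S] (G : AddSubgroup S) (s : S)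
    (h : ∀ χ : S →+ AddCircle (1 : ℚ), (∀ z ∈ G, χ z = 0) → χ s = 0) : s ∈ G := by
  by_contra hs
  have hne : (QuotientAddGroup.mk' G s) ≠ 0 := by
    simpa [QuotientAddGroup.eq_zero_iff] using hs
  obtain ⟨c, hc⟩ := CharacterModule.exists_character_apply_ne_zero_of_ne_zero hne
  refine hc ?_
  have := h ((show (S ⧸ G) →+ AddCircle (1 : ℚ) from c).comp (QuotientAddGroup.mk' G))
    (fun z hz => by
      have hz0 : (QuotientAddGroup.mk' G) z = 0 := by
        simpa [QuotientAddGroup.eq_zero_iff] using hz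
      exact (congrArg (show (S ⧸ G) →+ AddCircle (1 : ℚ) from c) hz0).trans (map_zero _))
  exact this

end Aux

/-- Over a right perfect ring (every flat module is projective), there is an
epimorphism `g : I → J` with `I` injective such that a module `M` is projective
iff every homomorphism `M → J` factors through `g`. -/
theorem perfect_projectivity_cofactorization (R : Type u) [Ring R]
    (hperf : ∀ M : ModuleCat.{u} R, FlatModule R ↥M → Module.Projective R ↥M) :
    ∃ (I J : ModuleCat.{u} R) (g : ↥I →ₗ[R] ↥J),
      Function.Surjective g ∧ Module.Injective R ↥I ∧
        ∀ M : ModuleCat.{u} R,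
          Module.Projective R ↥M ↔
            ∀ h : ↥M →ₗ[R] ↥J, ∃ k : ↥M →ₗ[R] ↥I, g ∘ₗ k = h := by
  classical
  -- the test module `K` and its injective envelope-like embedding
  set Kmod : ModuleCat.{u} R := ModuleCat.of R (∀ σ : RelIdx R, AnnChar R σ) with hKmod
  set I : ModuleCat.{u} R := CategoryTheory.Injective.under Kmod with hI
  have hInjI : CategoryTheory.Injective (ModuleCat.of R ↥I) :=
    CategoryTheory.Injective.injective_under Kmod
  have hMI : Module.Injective R ↥I := Module.injective_module_of_injective_object R ↥I
  set ι : Kmod →ₗ[R] ↥I := (CategoryTheory.Injective.ι Kmod).hom with hι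
  have ιinj : Function.Injective ι :=
    (ModuleCat.mono_iff_injective (CategoryTheory.Injective.ι Kmod)).mp inferInstance
  set KI : Submodule R ↥I := LinearMap.range ι with hKI
  refine ⟨I, ModuleCat.of R (↥I ⧸ KI), KI.mkQ, Submodule.mkQ_surjective KI, hMI, fun M => ?_⟩
  constructor
  · intro hproj h
    exact Module.projective_lifting_property KI.mkQ h (Submodule.mkQ_surjective KI)
  · intro hfact
    refine hperf M ?_
    intro n r x hrx
    -- free presentation of M
    set π : (↥M →₀ R) →ₗ[R] ↥M := Finsupp.linearCombination R id with hπ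
    have hπsingle : ∀ m : ↥M, π (Finsupp.single m 1) = m := by
      intro m; simp [hπ, Finsupp.linearCombination_single]
    have hπsurj : Function.Surjective π := fun m => ⟨Finsupp.single m 1, hπsingle m⟩
    set S : Submodule R (↥M →₀ R) := LinearMap.ker π with hS
    set s : (↥M →₀ R) := ∑ i, r i • Finsupp.single (x i) (1 : R) with hs
    have hsS : s ∈ S := by
      simp only [hS, LinearMap.mem_ker, hs, map_sum, map_smul, hπsingle]
      exact hrx
    set sS : ↥S := ⟨s, hsS⟩ with hsSdef
    set σ0 : RelIdx R := ⟨n, r⟩ with hσ0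
    set G : AddSubgroup ↥S :=
      AddSubgroup.closure {z | ∃ (i : Fin n) (b : R) (t : ↥S), z = (r i * b) • t} with hG
    -- Step 1: `sS ∈ G`, via the factorization property applied to a character-built map
    have step1 : sS ∈ G := by
      refine mem_of_forall_char G sS ?_
      intro χ hχ
      -- the linear map `ε : S → AnnChar σ0`
      have hmem : ∀ t : ↥S, charOfSmul χ t ∈ AnnChar R σ0 := by
        intro t i b
        show χ ((σ0.2 i * b) • t) = 0
        exact hχ _ (AddSubgroup.subset_closure ⟨i, b, t, rfl⟩)
      set ε : ↥S →ₗ[R] ↥(AnnChar R σ0) :=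
        { toFun := fun t => ⟨charOfSmul χ t, hmem t⟩
          map_add' := fun t t' => by
            ext c
            show χ (c • (t + t')) = χ (c • t) + χ (c • t')
            rw [smul_add, map_add]
          map_smul' := fun c' t => by
            ext c
            show χ (c • c' • t) = χ ((c * c') • t)
            rw [mul_smul] } with hε
      set εP : ↥S →ₗ[R] ↥Kmod :=
        (LinearMap.single R (fun σ : RelIdx R => ↥(AnnChar R σ)) σ0) ∘ₗ ε with hεP
      set ε' : ↥S →ₗ[R] ↥I := ι ∘ₗ εP with hε'
      -- extend along `S ↪ F` using injectivity of `I`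
      obtain ⟨Φ, hΦ⟩ := hMI.out (X := ↥S) (Y := (↥M →₀ R)) S.subtype (Submodule.injective_subtype S) ε'
      -- induced map `h : M → J`
      have hle : S ≤ LinearMap.ker (KI.mkQ ∘ₗ Φ) := by
        intro t ht
        have h1 : Φ t = ε' ⟨t, ht⟩ := hΦ ⟨t, ht⟩
        simp only [LinearMap.mem_ker, LinearMap.comp_apply, h1, hε', LinearMap.comp_apply]
        rw [Submodule.mkQ_apply, Submodule.Quotient.mk_eq_zero]
        exact ⟨εP ⟨t, ht⟩, rfl⟩
      set e : ((↥M →₀ R) ⧸ S) ≃ₗ[R] ↥M := π.quotKerEquivOfSurjective hπsurj with he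
      set h : ↥M →ₗ[R] ↥I ⧸ KI :=
        (S.liftQ (KI.mkQ ∘ₗ Φ) hle) ∘ₗ (e.symm : ↥M →ₗ[R] (↥M →₀ R) ⧸ S) with hh
      have hkey : ∀ f : (↥M →₀ R), h (π f) = KI.mkQ (Φ f) := by
        intro f
        have h1 : e.symm (π f) = Submodule.Quotient.mk f := by
          rw [LinearEquiv.symm_apply_eq]
          rfl
        simp only [hh, LinearMap.comp_apply, LinearEquiv.coe_coe, h1,
          Submodule.liftQ_apply, LinearMap.comp_apply]
      obtain ⟨k, hk⟩ := hfact h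
      set ψ : (↥M →₀ R) →ₗ[R] ↥I := Φ - k ∘ₗ π with hψ
      have hψS : ∀ t : ↥S, ψ t = ε' t := by
        intro t
        have h0 : π (t : (↥M →₀ R)) = 0 := t.2
        simp only [hψ, LinearMap.sub_apply, LinearMap.comp_apply, h0, map_zero, sub_zero]
        exact hΦ t
      have hψK : ∀ f : (↥M →₀ R), ψ f ∈ KI := by
        intro f
        have : KI.mkQ (ψ f) = 0 := by
          have hkf : KI.mkQ (k (π f)) = h (π f) := LinearMap.congr_fun hk (π f)
          simp only [hψ, LinearMap.sub_apply, LinearMap.comp_apply, map_sub]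
          rw [hkf, hkey f, sub_self]
        rwa [← Submodule.Quotient.mk_eq_zero, ← Submodule.mkQ_apply]
      -- pull back along `ι`
      have hw : ∀ i : Fin n, ∃ w : ↥Kmod, ι w = ψ (Finsupp.single (x i) 1) := by
        intro i
        obtain ⟨w, hw⟩ := hψK (Finsupp.single (x i) 1)
        exact ⟨w, hw⟩
      choose w hwspec using hw
      have heq : εP sS = ∑ i, r i • w i := by
        apply ιinj
        rw [map_sum]
        simp only [map_smul, hwspec]
        have h2 : ι (εP sS) = ψ s := (hψS sS).symm
        rw [h2, hs, map_sum]
        simp only [map_smul]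
      -- evaluate at component σ0 and at `1`
      have heval := congrArg (fun v : ↥Kmod => ((v σ0 : CharR R) (1 : R))) heq
      have hLHS : ((εP sS σ0 : CharR R)) (1 : R) = χ sS := by
        have h3 : εP sS σ0 = ε sS := by
          rw [hεP]
          exact Pi.single_eq_same _ _
        rw [h3]
        show χ ((1 : R) • sS) = χ sS
        rw [one_smul]
      have hRHS : (((∑ i, r i • w i) σ0 : CharR R)) (1 : R) = 0 := by
        rw [Finset.sum_apply]
        have : ((∑ i, (r i • w i) σ0 : ↥(AnnChar R σ0)) : CharR R) (1 : R)
            = ∑ i, (((r i • w i) σ0 : ↥(AnnChar R σ0)) : CharR R) (1 : R) := by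
          induction (Finset.univ : Finset (Fin n)) using Finset.induction_on with
          | empty => simp
          | insert _ _ hnot ih =>
            rw [Finset.sum_insert hnot, Finset.sum_insert hnot, Submodule.coe_add,
              CharR.add_apply, ih]
        rw [this]
        refine Finset.sum_eq_zero fun i _ => ?_
        have hmemw : ((w i σ0 : CharR R)) ∈ AnnChar R σ0 := (w i σ0).2
        show ((r i • w i σ0 : ↥(AnnChar R σ0)) : CharR R) (1 : R) = 0
        rw [Submodule.coe_smul, CharR.smul_apply, one_mul]
        have := hmemw i (1 : R)
        rwa [mul_one] at this
      rw [hLHS] at heval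
      rw [heval]
      exact hRHS
    -- Step 2: extract the factorization from `sS ∈ G`
    have step2 : ∃ w : Fin n → ↥S, s = ∑ i, r i • ((w i : (↥M →₀ R))) := by
      have : ∀ (z : ↥S) (_ : z ∈ G), ∃ w : Fin n → ↥S, (z : (↥M →₀ R)) = ∑ i, r i • ((w i : (↥M →₀ R))) := by
        intro z hz
        induction hz using AddSubgroup.closure_induction with
        | mem z hzz =>
          obtain ⟨i, b, t, rfl⟩ := hzz
          refine ⟨fun j => if j = i then b • t else 0, ?_⟩
          rw [Fintype.sum_eq_single i (fun j hj => by simp [hj])]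
          simp [smul_smul]
        | zero => exact ⟨0, by simp⟩
        | add z z' hz hz' ihz ihz' =>
          obtain ⟨w1, hw1⟩ := ihz
          obtain ⟨w2, hw2⟩ := ihz'
          refine ⟨w1 + w2, ?_⟩
          simp only [Submodule.coe_add, hw1, hw2, Pi.add_apply, smul_add, Finset.sum_add_distrib]
        | neg z hz ihz =>
          obtain ⟨w1, hw1⟩ := ihz
          refine ⟨-w1, ?_⟩
          rw [Submodule.coe_neg, hw1, ← Finset.sum_neg_distrib]
          exact Finset.sum_congr rfl fun i _ => by rw [Pi.neg_apply, Submodule.coe_neg, smul_neg]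
      obtain ⟨w, hw⟩ := this sS step1
      exact ⟨w, hw⟩
    obtain ⟨w, hwrep⟩ := step2
    set u : Fin n → (↥M →₀ R) := fun i => Finsupp.single (x i) 1 - (w i : (↥M →₀ R)) with hu
    have hπu : ∀ i, π (u i) = x i := by
      intro i
      have : π ((w i : (↥M →₀ R))) = 0 := (w i).2
      simp [hu, map_sub, hπsingle, this]
    have husum : ∑ i, r i • u i = 0 := by
      simp only [hu, smul_sub, Finset.sum_sub_distrib, ← hs, ← hwrep, sub_self]
    -- finite support business
    set T : Finset ↥M := Finset.univ.biUnion (fun i : Fin n => (u i).support) with hT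
    have hsupp : ∀ i, (u i).support ⊆ T := fun i m hm =>
      Finset.mem_biUnion.mpr ⟨i, Finset.mem_univ i, hm⟩
    set m : ℕ := Fintype.card ↥T with hm
    set eT : ↥T ≃ Fin m := Fintype.equivFin ↥T with heT
    set y : Fin m → ↥M := fun j => ((eT.symm j : ↥T) : ↥M) with hy
    set a : Fin n → Fin m → R := fun i j => u i (y j) with ha
    refine ⟨m, a, y, ?_, ?_⟩
    · intro i
      have h1 : x i = ∑ p ∈ T, u i p • p := by
        rw [← hπu i, hπ]
        rw [Finsupp.linearCombination_apply]
        rw [Finsupp.sum_of_support_subset (u i) (hsupp i) (fun p c => c • (id p : ↥M))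
          (fun p _ => by simp)]
        rfl
      rw [h1, ← Finset.sum_coe_sort T (fun p => u i p • p)]
      rw [← Equiv.sum_comp eT.symm (fun t : ↥T => u i (t : ↥M) • ((t : ↥M)))]
    · intro j
      have := congrArg (fun v : (↥M →₀ R) => v (y j)) husum
      simpa only [Finset.sum_apply', Finsupp.smul_apply, smul_eq_mul, Finsupp.coe_zero,
        Pi.zero_apply] using this
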